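/- Let (X,φ) be an expansive dynamical system and x, y ∈ X. If x is synchronizing and x ∼_lc y, then y is synchronizing. -/

import Mathlib

open Filter Topology Set

namespace Paper

variable {X : Type*} [MetricSpace X] [CompactSpace X]

/-- The `n`-th iterate (for `n : ℤ`) of the homeomorphism `φ`. -/
def It (φ : X ≃ₜ X) (n : ℤ) : X → X := fun x => (φ.toEquiv ^ n) x

/-- The local stable set `Xˢ(x, ε)`. -/
def locS (φ : X ≃ₜ X) (x : X) (ε : ℝ) : Set X :=
  {y | ∀ n : ℕ, dist (It φ n x) (It φ n y) ≤ ε}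

/-- The local unstable set `Xᵘ(x, ε)`. -/
def locU (φ : X ≃ₜ X) (x : X) (ε : ℝ) : Set X :=
  {y | ∀ n : ℕ, dist (It φ (-(n : ℤ)) x) (It φ (-(n : ℤ)) y) ≤ ε}

/-- The set `D_ε` on which the bracket is defined. -/
def Dset (φ : X ≃ₜ X) (ε : ℝ) : Set (X × X) :=
  {p | (locS φ p.1 ε ∩ locU φ p.2 ε).Nonempty}

/-- `(X, φ)` is expansive with expansiveness constant `εX`. -/
def IsExpansive (φ : X ≃ₜ X) (εX : ℝ) : Prop :=
  0 < εX ∧ ∀ x y : X, (∀ n : ℤ, dist (It φ n x) (It φ n y) ≤ εX) → x = y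

/-- The metric is adapted (Fried), with constants `η` and `lam`. -/
def IsAdapted (φ : X ≃ₜ X) (η lam : ℝ) : Prop :=
  0 < η ∧ 0 < lam ∧ lam < 1 ∧
    (∀ x y : X, y ∈ locS φ x η → dist (φ x) (φ y) ≤ lam * dist x y) ∧
    (∀ x y : X, y ∈ locU φ x η → dist (φ.symm x) (φ.symm y) ≤ lam * dist x y)

/-- `p` is a periodic point of `φ`. -/
def IsPeriodic (φ : X ≃ₜ X) (p : X) : Prop :=
  ∃ n : ℕ, 1 ≤ n ∧ It φ n p = p

/-- `x` is a synchronizing point: `(x, x)` is in the interior of `D_ε` for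
some `0 < ε ≤ ε₀`. -/
def IsSyncPt (φ : X ≃ₜ X) (ε₀ : ℝ) (x : X) : Prop :=
  ∃ ε : ℝ, 0 < ε ∧ ε ≤ ε₀ ∧ (x, x) ∈ interior (Dset φ ε)

/-- `(X, φ)` is irreducible. -/
def Irred (φ : X ≃ₜ X) : Prop :=
  ∀ U V : Set X, IsOpen U → IsOpen V → U.Nonempty → V.Nonempty →
    ∃ n : ℕ, 0 < n ∧ (It φ n '' U ∩ V).Nonempty

/-- `(X, φ)` is mixing. -/
def Mixing (φ : X ≃ₜ X) : Prop :=
  ∀ U V : Set X, IsOpen U → IsOpen V → U.Nonempty → V.Nonempty →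
    ∃ N : ℕ, ∀ n : ℕ, N ≤ n → (It φ n '' U ∩ V).Nonempty

/-- Every point of `(X, φ)` is non-wandering. -/
def NonWandering (φ : X ≃ₜ X) : Prop :=
  ∀ x : X, ∀ U ∈ 𝓝 x, ∃ n : ℕ, 0 < n ∧ (It φ n '' U ∩ U).Nonempty

/-- Stable equivalence `x ∼ₛ y`. -/
def StableEq (φ : X ≃ₜ X) (x y : X) : Prop :=
  Tendsto (fun n : ℕ => dist (It φ n x) (It φ n y)) atTop (𝓝 0)

/-- Unstable equivalence `x ∼ᵤ y`. -/
def UnstableEq (φ : X ≃ₜ X) (x y : X) : Prop :=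
  Tendsto (fun n : ℕ => dist (It φ (-(n : ℤ)) x) (It φ (-(n : ℤ)) y)) atTop (𝓝 0)

/-- Local conjugacy `x ∼_lc y`: a homeomorphism `γ : U → V` of open
neighborhoods with `γ x = y` and `sup_{z ∈ U} d(φⁿ z, φⁿ (γ z)) → 0` as
`n → ±∞`. -/
def LocConj (φ : X ≃ₜ X) (x y : X) : Prop :=
  ∃ (U V : Set X) (γ γinv : X → X),
    IsOpen U ∧ IsOpen V ∧ x ∈ U ∧ y ∈ V ∧ γ x = y ∧
    Set.MapsTo γ U V ∧ Set.MapsTo γinv V U ∧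
    (∀ z ∈ U, γinv (γ z) = z) ∧ (∀ w ∈ V, γ (γinv w) = w) ∧
    ContinuousOn γ U ∧ ContinuousOn γinv V ∧
    (∀ ε : ℝ, 0 < ε → ∃ N : ℕ, ∀ n : ℤ, (N : ℤ) ≤ |n| → ∀ z ∈ U,
      dist (It φ n z) (It φ n (γ z)) ≤ ε)

/-- Stable local conjugacy `x ∼_lcs y`: a homeomorphism of `Xᵘ(x, δ)` onto
its image in `Xᵘ(y, δ')` sending `x` to `y`, uniformly asymptotic in forward
time. -/
def StableLC (φ : X ≃ₜ X) (x y : X) : Prop :=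
  ∃ (δ δ' : ℝ) (γ : X → X), 0 < δ ∧ 0 < δ' ∧
    Set.MapsTo γ (locU φ x δ) (locU φ y δ') ∧
    Set.InjOn γ (locU φ x δ) ∧ ContinuousOn γ (locU φ x δ) ∧ γ x = y ∧
    (∀ ε : ℝ, 0 < ε → ∃ N : ℕ, ∀ n : ℕ, N ≤ n → ∀ z ∈ locU φ x δ,
      dist (It φ n z) (It φ n (γ z)) ≤ ε)

/-- Unstable local conjugacy `x ∼_lcu y`: a homeomorphism of `Xˢ(x, δ)` onto
its image in `Xˢ(y, δ')` sending `x` to `y`, uniformly asymptotic in backward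
time. -/
def UnstableLC (φ : X ≃ₜ X) (x y : X) : Prop :=
  ∃ (δ δ' : ℝ) (γ : X → X), 0 < δ ∧ 0 < δ' ∧
    Set.MapsTo γ (locS φ x δ) (locS φ y δ') ∧
    Set.InjOn γ (locS φ x δ) ∧ ContinuousOn γ (locS φ x δ) ∧ γ x = y ∧
    (∀ ε : ℝ, 0 < ε → ∃ N : ℕ, ∀ n : ℕ, N ≤ n → ∀ z ∈ locS φ x δ,
      dist (It φ (-(n : ℤ)) z) (It φ (-(n : ℤ)) (γ z)) ≤ ε)


section Helpers
set_option linter.unusedSectionVars false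

lemma It_zero (φ : X ≃ₜ X) (x : X) : It φ 0 x = x := rfl

lemma It_add (φ : X ≃ₜ X) (m n : ℤ) (x : X) : It φ (m + n) x = It φ m (It φ n x) := by
  simp [It, zpow_add, Equiv.Perm.mul_apply]

lemma It_one (φ : X ≃ₜ X) (x : X) : It φ 1 x = φ x := by
  simp [It]

lemma It_neg_one (φ : X ≃ₜ X) (x : X) : It φ (-1) x = φ.symm x := by
  simp [It, Equiv.Perm.inv_def]

lemma continuous_It (φ : X ≃ₜ X) (n : ℤ) : Continuous (It φ n) := by
  induction n using Int.induction_on with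
  | zero => exact continuous_id
  | succ k ih =>
      have h : It φ (k + 1) = fun x => It φ k (φ x) := by
        funext x; rw [It_add, It_one]
      rw [h]; exact ih.comp φ.continuous
  | pred k ih =>
      have h : It φ (-k - 1) = fun x => It φ (-k) (φ.symm x) := by
        funext x; rw [sub_eq_add_neg, It_add, It_neg_one]
      rw [h]; exact ih.comp φ.continuous_symm

lemma stable_contract (φ : X ≃ₜ X) {η lam : ℝ} (had : IsAdapted φ η lam)
    {a z : X} {ε : ℝ} (hεη : ε ≤ η) (hz : z ∈ locS φ a ε) :
    ∀ n : ℕ, dist (It φ n a) (It φ n z) ≤ lam ^ n * dist a z := by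
  obtain ⟨hη, hlam, hlam1, hs, hu⟩ := had
  intro n
  induction n with
  | zero => simp [It_zero]
  | succ m ih =>
      have hmem : It φ m z ∈ locS φ (It φ m a) η := by
        intro k
        have h1 : It φ k (It φ m a) = It φ ((k : ℤ) + m) a := (It_add φ k m a).symm
        have h2 : It φ k (It φ m z) = It φ ((k : ℤ) + m) z := (It_add φ k m z).symm
        rw [h1, h2]
        have := hz (k + m)
        push_cast at this
        exact this.trans hεη
      have hstep := hs _ _ hmem
      have heq : ∀ w : X, It φ (m + 1 : ℕ) w = φ (It φ m w) := by
        intro w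
        have : ((m + 1 : ℕ) : ℤ) = 1 + (m : ℤ) := by push_cast; ring
        rw [this, It_add, It_one]
      rw [heq, heq]
      calc dist (φ (It φ m a)) (φ (It φ m z)) ≤ lam * dist (It φ m a) (It φ m z) := hstep
        _ ≤ lam * (lam ^ m * dist a z) := mul_le_mul_of_nonneg_left ih hlam.le
        _ = lam ^ (m + 1) * dist a z := by ring

lemma unstable_contract (φ : X ≃ₜ X) {η lam : ℝ} (had : IsAdapted φ η lam)
    {a z : X} {ε : ℝ} (hεη : ε ≤ η) (hz : z ∈ locU φ a ε) :
    ∀ n : ℕ, dist (It φ (-(n : ℤ)) a) (It φ (-(n : ℤ)) z) ≤ lam ^ n * dist a z := by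
  obtain ⟨hη, hlam, hlam1, hs, hu⟩ := had
  intro n
  induction n with
  | zero => simp [It_zero]
  | succ m ih =>
      have hmem : It φ (-(m : ℤ)) z ∈ locU φ (It φ (-(m : ℤ)) a) η := by
        intro k
        have h1 : It φ (-(k : ℤ)) (It φ (-(m : ℤ)) a) = It φ (-((k + m : ℕ) : ℤ)) a := by
          rw [← It_add]; congr 1; push_cast; ring
        have h2 : It φ (-(k : ℤ)) (It φ (-(m : ℤ)) z) = It φ (-((k + m : ℕ) : ℤ)) z := by
          rw [← It_add]; congr 1; push_cast; ring
        rw [h1, h2]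
        exact (hz (k + m)).trans hεη
      have hstep := hu _ _ hmem
      have heq : ∀ w : X, It φ (-((m + 1 : ℕ) : ℤ)) w = φ.symm (It φ (-(m : ℤ)) w) := by
        intro w
        have : (-((m + 1 : ℕ) : ℤ)) = -1 + -(m : ℤ) := by push_cast; ring
        rw [this, It_add, It_neg_one]
      rw [heq, heq]
      calc dist (φ.symm (It φ (-(m : ℤ)) a)) (φ.symm (It φ (-(m : ℤ)) z))
          ≤ lam * dist (It φ (-(m : ℤ)) a) (It φ (-(m : ℤ)) z) := hstep
        _ ≤ lam * (lam ^ m * dist a z) := mul_le_mul_of_nonneg_left ih hlam.le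
        _ = lam ^ (m + 1) * dist a z := by ring

lemma bracket_close (φ : X ≃ₜ X) {εX : ℝ} (hexp : IsExpansive φ εX) {ε : ℝ}
    (hεεX : ε ≤ εX) (x : X) {δ : ℝ} (hδ : 0 < δ) :
    ∃ δ₂ : ℝ, 0 < δ₂ ∧ ∀ a b z : X, dist a x < δ₂ → dist b x < δ₂ →
      z ∈ locS φ a ε → z ∈ locU φ b ε → dist z x < δ := by
  by_contra hcon
  push_neg at hcon
  have H : ∀ k : ℕ, ∃ a b z : X, dist a x < 1 / (k + 1) ∧ dist b x < 1 / (k + 1) ∧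
      z ∈ locS φ a ε ∧ z ∈ locU φ b ε ∧ δ ≤ dist z x := by
    intro k
    obtain ⟨a, b, z, h1, h2, h3, h4, h5⟩ := hcon (1 / (k + 1)) (by positivity)
    exact ⟨a, b, z, h1, h2, h3, h4, h5⟩
  choose a b z h1 h2 h3 h4 h5 using H
  obtain ⟨zl, -, ψ, hψ, hzlim⟩ :=
    IsCompact.tendsto_subseq (x := z) isCompact_univ (fun k => mem_univ _)
  have hdist0 : Tendsto (fun k : ℕ => (1 : ℝ) / (k + 1)) atTop (𝓝 0) :=
    tendsto_one_div_add_atTop_nhds_zero_nat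
  have hψtop : Tendsto ψ atTop atTop := hψ.tendsto_atTop
  have halim : Tendsto (fun k => a (ψ k)) atTop (𝓝 x) := by
    rw [tendsto_iff_dist_tendsto_zero]
    apply squeeze_zero (fun k => dist_nonneg) (fun k => (h1 (ψ k)).le)
    exact hdist0.comp hψtop
  have hblim : Tendsto (fun k => b (ψ k)) atTop (𝓝 x) := by
    rw [tendsto_iff_dist_tendsto_zero]
    apply squeeze_zero (fun k => dist_nonneg) (fun k => (h2 (ψ k)).le)
    exact hdist0.comp hψtop
  have key : ∀ n : ℤ, dist (It φ n x) (It φ n zl) ≤ εX := by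
    intro n
    rcases Int.eq_nat_or_neg n with ⟨m, rfl | rfl⟩
    · have hlim : Tendsto (fun k => dist (It φ m (a (ψ k))) (It φ m (z (ψ k)))) atTop
          (𝓝 (dist (It φ m x) (It φ m zl))) :=
        (((continuous_It φ m).tendsto x).comp halim).dist
          (((continuous_It φ m).tendsto zl).comp hzlim)
      exact (le_of_tendsto hlim (Eventually.of_forall fun k => h3 (ψ k) m)).trans hεεX
    · have hlim : Tendsto (fun k => dist (It φ (-(m : ℤ)) (b (ψ k))) (It φ (-(m : ℤ)) (z (ψ k))))
          atTop (𝓝 (dist (It φ (-(m : ℤ)) x) (It φ (-(m : ℤ)) zl))) :=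
        (((continuous_It φ _).tendsto x).comp hblim).dist
          (((continuous_It φ _).tendsto zl).comp hzlim)
      exact (le_of_tendsto hlim (Eventually.of_forall fun k => h4 (ψ k) m)).trans hεεX
  have hxz : x = zl := hexp.2 x zl key
  have hfin : δ ≤ dist zl x := by
    have hlim : Tendsto (fun k => dist (z (ψ k)) x) atTop (𝓝 (dist zl x)) :=
      hzlim.dist tendsto_const_nhds
    exact ge_of_tendsto hlim (Eventually.of_forall fun k => h5 (ψ k))
  rw [← hxz, dist_self] at hfin
  linarith

end Helpers

/-- being synchronizing is invariant under local conjugacy. -/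
theorem locConj_preserves_sync (φ : X ≃ₜ X) (εX η lam : ℝ)
    (hexp : IsExpansive φ εX) (had : IsAdapted φ η lam) (x y : X)
    (hx : IsSyncPt φ (min η (εX / 2)) x) (hlc : LocConj φ x y) :
    IsSyncPt φ (min η (εX / 2)) y := by
  obtain ⟨ε, hεpos, hεle, hxint⟩ := hx
  obtain ⟨U, V, γ, γinv, hU, hV, hxU, hyV, hγx, hmap, hmapinv, hleft, hright,
    hcγ, hcγinv, hunif⟩ := hlc
  have hεX : 0 < εX := hexp.1
  have hη : 0 < η := had.1
  have hlam : 0 < lam := had.2.1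
  have hlam1 : lam < 1 := had.2.2.1
  set ε₀ : ℝ := min η (εX / 2) with hε₀def
  have hε₀pos : 0 < ε₀ := lt_min hη (by linarith)
  refine ⟨ε₀, hε₀pos, le_refl _, ?_⟩
  set ε₁ : ℝ := ε₀ / 3 with hε₁def
  have hε₁ : 0 < ε₁ := by positivity
  have hεη : ε ≤ η := hεle.trans (min_le_left _ _)
  have hεεX : ε ≤ εX := hεle.trans ((min_le_right _ _).trans (by linarith))
  -- N₀ : uniform asymptotic bound from the local conjugacy
  obtain ⟨N₀, hN₀⟩ := hunif ε₁ hε₁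
  -- N₁ : contraction bound
  have htend : Tendsto (fun n : ℕ => lam ^ n * ε) atTop (𝓝 0) := by
    simpa using (tendsto_pow_atTop_nhds_zero_of_lt_one hlam.le hlam1).mul_const ε
  obtain ⟨N₁, hN₁⟩ := (htend.eventually (gt_mem_nhds hε₁)).exists
  set N : ℕ := max N₀ N₁ with hNdef
  -- the small-time neighborhood T of x
  have hγcx : ContinuousAt γ x := hcγ.continuousAt (hU.mem_nhds hxU)
  have hTn : ∀ n : ℤ, {u : X | dist (It φ n (γ u)) (It φ n y) < ε₁} ∈ 𝓝 x := by
    intro n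
    have hc : ContinuousAt (fun u => It φ n (γ u)) x :=
      ((continuous_It φ n).continuousAt).comp hγcx
    have hmem : Metric.ball (It φ n y) ε₁ ∈ 𝓝 (It φ n (γ x)) := by
      rw [hγx]; exact Metric.ball_mem_nhds _ hε₁
    have := hc.preimage_mem_nhds hmem
    simpa [Metric.mem_ball, Set.preimage] using this
  have hT : (U ∩ ⋂ n ∈ Finset.Icc (-(N : ℤ)) (N : ℤ),
      {u : X | dist (It φ n (γ u)) (It φ n y) < ε₁}) ∈ 𝓝 x := by
    refine inter_mem (hU.mem_nhds hxU) ?_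
    exact (Filter.biInter_finset_mem _).2 fun n _ => hTn n
  obtain ⟨δ, hδpos, hδT⟩ := Metric.mem_nhds_iff.1 hT
  -- the bracket-continuity radius δ₂
  obtain ⟨δ₂, hδ₂pos, hδ₂⟩ := bracket_close φ hexp hεεX x hδpos
  -- the interior radius r around (x, x)
  have hDnhds : Dset φ ε ∈ 𝓝 (x, x) := mem_interior_iff_mem_nhds.1 hxint
  obtain ⟨r, hrpos, hrsub⟩ := Metric.mem_nhds_iff.1 hDnhds
  -- the neighborhood W of y
  set ρ : ℝ := min r (min δ₂ δ) with hρdef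
  have hρpos : 0 < ρ := lt_min hrpos (lt_min hδ₂pos hδpos)
  have hγinvy : ContinuousAt γinv y := hcγinv.continuousAt (hV.mem_nhds hyV)
  have hγinvyx : γinv y = x := by rw [← hγx]; exact hleft x hxU
  have hWnhds : (V ∩ γinv ⁻¹' Metric.ball x ρ) ∈ 𝓝 y := by
    refine inter_mem (hV.mem_nhds hyV) ?_
    apply hγinvy.preimage_mem_nhds
    rw [hγinvyx]
    exact Metric.ball_mem_nhds _ hρpos
  set W : Set X := V ∩ γinv ⁻¹' Metric.ball x ρ with hWdef
  rw [mem_interior_iff_mem_nhds, nhds_prod_eq]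
  refine mem_of_superset (prod_mem_prod hWnhds hWnhds) ?_
  rintro ⟨aa, bb⟩ ⟨⟨haV, haρ⟩, hbV, hbρ⟩
  -- pull back
  have ha'U : γinv aa ∈ U := hmapinv haV
  have hb'U : γinv bb ∈ U := hmapinv hbV
  have ha'x : dist (γinv aa) x < ρ := by simpa [Metric.mem_ball] using haρ
  have hb'x : dist (γinv bb) x < ρ := by simpa [Metric.mem_ball] using hbρ
  have hρr : ρ ≤ r := min_le_left _ _
  have hρδ₂ : ρ ≤ δ₂ := (min_le_right _ _).trans (min_le_left _ _)
  have hρδ : ρ ≤ δ := (min_le_right _ _).trans (min_le_right _ _)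
  -- get the bracket point z
  have hpair : ((γinv aa, γinv bb) : X × X) ∈ Metric.ball ((x, x) : X × X) r := by
    rw [Metric.mem_ball, Prod.dist_eq]
    exact max_lt (lt_of_lt_of_le ha'x hρr) (lt_of_lt_of_le hb'x hρr)
  obtain ⟨z, hzS, hzU⟩ := hrsub hpair
  have hzx : dist z x < δ :=
    hδ₂ _ _ z (lt_of_lt_of_le ha'x hρδ₂) (lt_of_lt_of_le hb'x hρδ₂) hzS hzU
  have hzT := hδT (Metric.mem_ball.2 hzx)
  have hzU' : z ∈ U := hzT.1
  have ha'T := hδT (Metric.mem_ball.2 (lt_of_lt_of_le ha'x hρδ))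
  have hb'T := hδT (Metric.mem_ball.2 (lt_of_lt_of_le hb'x hρδ))
  have haγ : γ (γinv aa) = aa := hright aa haV
  have hbγ : γ (γinv bb) = bb := hright bb hbV
  have hda'z : dist (γinv aa) z ≤ ε := by simpa [It_zero] using hzS 0
  have hdb'z : dist (γinv bb) z ≤ ε := by simpa [It_zero] using hzU 0
  -- small-time estimates from T
  have hsmall : ∀ u : X, u ∈ (U ∩ ⋂ n ∈ Finset.Icc (-(N : ℤ)) (N : ℤ),
      {u : X | dist (It φ n (γ u)) (It φ n y) < ε₁}) →
      ∀ n : ℤ, -(N : ℤ) ≤ n → n ≤ N → dist (It φ n (γ u)) (It φ n y) < ε₁ := by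
    intro u hu n hn1 hn2
    exact Set.mem_iInter₂.1 hu.2 n (Finset.mem_Icc.2 ⟨hn1, hn2⟩)
  -- lam-power bound
  have hpow : ∀ n : ℕ, N ≤ n → lam ^ n * ε ≤ ε₁ := by
    intro n hn
    have h1 : lam ^ n ≤ lam ^ N₁ :=
      pow_le_pow_of_le_one hlam.le hlam1.le (le_trans (le_max_right _ _) hn)
    have h2 : lam ^ n * ε ≤ lam ^ N₁ * ε :=
      mul_le_mul_of_nonneg_right h1 hεpos.le
    exact h2.trans hN₁.le
  refine ⟨γ z, ?_, ?_⟩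
  · -- γ z ∈ locS φ aa ε₀
    intro n
    by_cases hn : N ≤ n
    · have habs : (N₀ : ℤ) ≤ |(n : ℤ)| := by
        rw [abs_of_nonneg (by positivity : (0 : ℤ) ≤ (n : ℤ))]
        exact_mod_cast le_trans (le_max_left _ _) hn
      have t1 : dist (It φ n (γ (γinv aa))) (It φ n (γinv aa)) ≤ ε₁ := by
        rw [dist_comm]; exact hN₀ n habs _ ha'U
      rw [haγ] at t1
      have t2 : dist (It φ n (γinv aa)) (It φ n z) ≤ ε₁ := by
        have := stable_contract φ had hεη hzS n
        have h2 : lam ^ n * dist (γinv aa) z ≤ lam ^ n * ε :=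
          mul_le_mul_of_nonneg_left hda'z (by positivity)
        exact this.trans (h2.trans (hpow n hn))
      have t3 : dist (It φ n z) (It φ n (γ z)) ≤ ε₁ := hN₀ n habs z hzU'
      calc dist (It φ n aa) (It φ n (γ z))
          ≤ dist (It φ n aa) (It φ n (γinv aa)) + dist (It φ n (γinv aa)) (It φ n z)
              + dist (It φ n z) (It φ n (γ z)) := dist_triangle4 _ _ _ _
        _ ≤ ε₁ + ε₁ + ε₁ := by gcongr
        _ = ε₀ := by rw [hε₁def]; ring
    · push_neg at hn
      have hn1 : -(N : ℤ) ≤ (n : ℤ) :=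
        le_trans (neg_nonpos.2 (Int.natCast_nonneg _)) (Int.natCast_nonneg _)
      have hn2 : (n : ℤ) ≤ (N : ℤ) := by exact_mod_cast hn.le
      have s1 : dist (It φ n (γ (γinv aa))) (It φ n y) < ε₁ := hsmall _ ha'T n hn1 hn2
      have s2 : dist (It φ n (γ z)) (It φ n y) < ε₁ := hsmall _ hzT n hn1 hn2
      rw [haγ] at s1
      calc dist (It φ n aa) (It φ n (γ z))
          ≤ dist (It φ n aa) (It φ n y) + dist (It φ n y) (It φ n (γ z)) :=
            dist_triangle _ _ _
        _ ≤ ε₁ + ε₁ := by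
            have s2' : dist (It φ n y) (It φ n (γ z)) ≤ ε₁ := by
              rw [dist_comm]; exact s2.le
            exact add_le_add s1.le s2'
        _ ≤ ε₀ := by rw [hε₁def]; linarith
  · -- γ z ∈ locU φ bb ε₀
    intro n
    by_cases hn : N ≤ n
    · have habs : (N₀ : ℤ) ≤ |(-(n : ℤ))| := by
        rw [abs_neg, abs_of_nonneg (by positivity : (0 : ℤ) ≤ (n : ℤ))]
        exact_mod_cast le_trans (le_max_left _ _) hn
      have t1 : dist (It φ (-(n : ℤ)) (γ (γinv bb))) (It φ (-(n : ℤ)) (γinv bb)) ≤ ε₁ := by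
        rw [dist_comm]; exact hN₀ _ habs _ hb'U
      rw [hbγ] at t1
      have t2 : dist (It φ (-(n : ℤ)) (γinv bb)) (It φ (-(n : ℤ)) z) ≤ ε₁ := by
        have := unstable_contract φ had hεη hzU n
        have h2 : lam ^ n * dist (γinv bb) z ≤ lam ^ n * ε :=
          mul_le_mul_of_nonneg_left hdb'z (by positivity)
        exact this.trans (h2.trans (hpow n hn))
      have t3 : dist (It φ (-(n : ℤ)) z) (It φ (-(n : ℤ)) (γ z)) ≤ ε₁ := hN₀ _ habs z hzU'
      calc dist (It φ (-(n : ℤ)) bb) (It φ (-(n : ℤ)) (γ z))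
          ≤ dist (It φ (-(n : ℤ)) bb) (It φ (-(n : ℤ)) (γinv bb))
              + dist (It φ (-(n : ℤ)) (γinv bb)) (It φ (-(n : ℤ)) z)
              + dist (It φ (-(n : ℤ)) z) (It φ (-(n : ℤ)) (γ z)) := dist_triangle4 _ _ _ _
        _ ≤ ε₁ + ε₁ + ε₁ := by gcongr
        _ = ε₀ := by rw [hε₁def]; ring
    · push_neg at hn
      have hn1 : -(N : ℤ) ≤ -(n : ℤ) := by
        have : (n : ℤ) ≤ (N : ℤ) := by exact_mod_cast hn.le
        omega
      have hn2 : -(n : ℤ) ≤ (N : ℤ) :=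
        le_trans (neg_nonpos.2 (Int.natCast_nonneg _)) (Int.natCast_nonneg _)
      have s1 : dist (It φ (-(n : ℤ)) (γ (γinv bb))) (It φ (-(n : ℤ)) y) < ε₁ :=
        hsmall _ hb'T _ hn1 hn2
      have s2 : dist (It φ (-(n : ℤ)) (γ z)) (It φ (-(n : ℤ)) y) < ε₁ := hsmall _ hzT _ hn1 hn2
      rw [hbγ] at s1
      calc dist (It φ (-(n : ℤ)) bb) (It φ (-(n : ℤ)) (γ z))
          ≤ dist (It φ (-(n : ℤ)) bb) (It φ (-(n : ℤ)) y)
              + dist (It φ (-(n : ℤ)) y) (It φ (-(n : ℤ)) (γ z)) := dist_triangle _ _ _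
        _ ≤ ε₁ + ε₁ := by
            have s2' : dist (It φ (-(n : ℤ)) y) (It φ (-(n : ℤ)) (γ z)) ≤ ε₁ := by
              rw [dist_comm]; exact s2.le
            exact add_le_add s1.le s2'
        _ ≤ ε₀ := by rw [hε₁def]; linarith


end Paper
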